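/- Let p be an odd prime, and a, b nonnegative integers with a < p, b < p, and p - 1 ≤ a + b. Then the coefficient of x^(p-1) in the polynomial x^a (1-x)^b over F_p equals -(a! · b!)/(a+b-p+1)!, where factorials are reduced mod p. -/
import Mathlib

theorem Fp_beta_integral (p a b : ℕ) [Fact p.Prime] (hodd : p ≠ 2)
    (ha : a < p) (hb : b < p) (hab : p - 1 ≤ a + b) :
    (Polynomial.X ^ a * (1 - Polynomial.X) ^ b : Polynomial (ZMod p)).coeff (p - 1) =
      -(((a.factorial : ZMod p) * (b.factorial : ZMod p)) /
        ((a + b + 1 - p).factorial : ZMod p)) := by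
  have hp : p.Prime := Fact.out
  have hp1 : 1 < p := hp.one_lt
  set k := p - 1 - a with hk
  have hk1 : p - 1 = k + a := by omega
  have hkb : k ≤ b := by omega
  have hm : b - k = a + b + 1 - p := by omega
  rw [hk1, Polynomial.coeff_X_pow_mul]
  have h1 : ((1 - Polynomial.X : Polynomial (ZMod p))) ^ b
      = Polynomial.C ((-1) ^ b) * (Polynomial.X + Polynomial.C (-1)) ^ b := by
    rw [map_pow, ← mul_pow]; congr 1
    rw [Polynomial.C_neg, Polynomial.C_1]; ring
  rw [h1, Polynomial.coeff_C_mul, Polynomial.coeff_X_add_C_pow]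
  -- now pure algebra in ZMod p
  have hM0 : ((a + b + 1 - p).factorial : ZMod p) ≠ 0 := by
    intro h
    rw [ZMod.natCast_eq_zero_iff] at h
    have := (Nat.Prime.dvd_factorial hp).mp h
    omega
  have hB : (b.factorial : ZMod p) =
      (b.choose k : ZMod p) * (k.factorial : ZMod p) * ((a + b + 1 - p).factorial : ZMod p) := by
    rw [← hm]
    exact_mod_cast congrArg (Nat.cast : ℕ → ZMod p) (Nat.choose_mul_factorial_mul_factorial hkb).symm
  have hAK' : ((p - 1 - a).factorial : ZMod p) * ((-1) ^ a * (a.factorial : ZMod p)) = -1 := by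
    have hd := ZMod.cast_descFactorial (n := a) (p := p) ha.le
    have hfd := congrArg (Nat.cast : ℕ → ZMod p)
      (Nat.factorial_mul_descFactorial (show a ≤ p - 1 by omega))
    push_cast at hfd
    rw [hd, ZMod.wilsons_lemma] at hfd
    exact hfd
  have e1 : ((-1 : ZMod p)) ^ a * (-1) ^ a = 1 := by
    rw [← pow_add]; exact Even.neg_one_pow ⟨a, rfl⟩
  have hAK : (a.factorial : ZMod p) * ((p - 1 - a).factorial : ZMod p) = (-1) ^ (a + 1) := by
    calc (a.factorial : ZMod p) * ((p - 1 - a).factorial : ZMod p)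
        = ((-1) ^ a * (-1) ^ a) * ((a.factorial : ZMod p) * ((p - 1 - a).factorial : ZMod p)) := by
          rw [e1, one_mul]
      _ = (-1) ^ a * (((p - 1 - a).factorial : ZMod p) * ((-1) ^ a * (a.factorial : ZMod p))) := by
          ring
      _ = (-1) ^ a * (-1) := by rw [hAK']
      _ = (-1) ^ (a + 1) := by rw [pow_succ]
  have hpe : Even (k + a) := by
    rw [← hk1]
    exact Nat.Odd.sub_odd (hp.odd_of_ne_two hodd) odd_one
  have hpar : ((-1 : ZMod p)) ^ k = (-1) ^ a := by
    calc ((-1 : ZMod p)) ^ k = (-1) ^ k * ((-1) ^ a * (-1) ^ a) := by rw [e1, mul_one]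
      _ = (-1) ^ (k + a) * (-1) ^ a := by ring
      _ = (-1) ^ a := by rw [hpe.neg_one_pow, one_mul]
  rw [← hk] at hAK
  have h2 : ((-1 : ZMod p)) ^ (b - k) * (-1) ^ b = (-1) ^ k := by
    have : (-1 : ZMod p) ^ b = (-1) ^ (b - k) * (-1) ^ k := by
      rw [← pow_add]; congr 1; omega
    rw [this, ← mul_assoc, ← pow_add, Even.neg_one_pow ⟨b - k, rfl⟩, one_mul]
  field_simp
  linear_combination (a.factorial : ZMod p) * hB
    + (b.choose k : ZMod p) * ((a + b + 1 - p).factorial : ZMod p) * hAK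
    + (b.choose k : ZMod p) * ((a + b + 1 - p).factorial : ZMod p) * h2
    + (b.choose k : ZMod p) * ((a + b + 1 - p).factorial : ZMod p) * hpar
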